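/- (Theorem 4 of the paper, Karp's theorem) Let L be a relational vocabulary, A and B be L-structures, and α be an ordinal. Then the following are equivalent: (1) A ≡^α_{∞ω} B, i.e. A and B satisfy exactly the same L_{∞ω}-sentences of quantifier rank at most α; (2) Player II has a winning strategy in EFD_α(A,B), i.e. WinII(∅,∅,α) holds. -/

import Mathlib

structure Vocab where
  Rel : Type
  arity : Rel → ℕ

structure Struc (L : Vocab) where
  Dom : Type
  nonempty : Nonempty Dom
  rel : (R : L.Rel) → (Fin (L.arity R) → Dom) → Prop


/-- `L_{∞ω}`-formulas in negation normal form, with conjunctions and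
disjunctions over arbitrary index sets. -/
inductive FmlInf (L : Vocab) : Type 1
  | eq : ℕ → ℕ → FmlInf L
  | neq : ℕ → ℕ → FmlInf L
  | rel : (R : L.Rel) → (Fin (L.arity R) → ℕ) → FmlInf L
  | nrel : (R : L.Rel) → (Fin (L.arity R) → ℕ) → FmlInf L
  | iand : (I : Type) → (I → FmlInf L) → FmlInf L
  | ior : (I : Type) → (I → FmlInf L) → FmlInf L
  | ex : ℕ → FmlInf L → FmlInf L
  | all : ℕ → FmlInf L → FmlInf L

def SatInf {L : Vocab} (A : Struc L) (v : ℕ → A.Dom) : FmlInf L → Prop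
  | .eq i j => v i = v j
  | .neq i j => v i ≠ v j
  | .rel R ts => A.rel R (fun k => v (ts k))
  | .nrel R ts => ¬ A.rel R (fun k => v (ts k))
  | .iand I f => ∀ i : I, SatInf A v (f i)
  | .ior I f => ∃ i : I, SatInf A v (f i)
  | .ex n φ => ∃ a : A.Dom, SatInf A (Function.update v n a) φ
  | .all n φ => ∀ a : A.Dom, SatInf A (Function.update v n a) φ

noncomputable def qrInf {L : Vocab} : FmlInf L → Ordinal
  | .eq _ _ => 0
  | .neq _ _ => 0
  | .rel _ _ => 0
  | .nrel _ _ => 0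
  | .iand I f => ⨆ i : I, qrInf (f i)
  | .ior I f => ⨆ i : I, qrInf (f i)
  | .ex _ φ => qrInf φ + 1
  | .all _ φ => qrInf φ + 1

def freeVarsInf {L : Vocab} : FmlInf L → Set ℕ
  | .eq i j => {i, j}
  | .neq i j => {i, j}
  | .rel _ ts => Set.range ts
  | .nrel _ ts => Set.range ts
  | .iand _ f => ⋃ i, freeVarsInf (f i)
  | .ior _ f => ⋃ i, freeVarsInf (f i)
  | .ex n φ => freeVarsInf φ \ {n}
  | .all n φ => freeVarsInf φ \ {n}

/-- `A ≡^α_{∞ω} B`: `A` and `B` satisfy the same `L_{∞ω}`-sentences of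
quantifier rank at most `α`. -/
def EquivInf {L : Vocab} (A B : Struc L) (α : Ordinal) : Prop :=
  ∀ φ : FmlInf L, freeVarsInf φ = ∅ → qrInf φ ≤ α →
    ((∀ v : ℕ → A.Dom, SatInf A v φ) ↔ (∀ v : ℕ → B.Dom, SatInf B v φ))

/-- The finite map `as ↦ bs` is a partial isomorphism. -/
def IsPartialIso {L : Vocab} (A B : Struc L) {n : ℕ}
    (as : Fin n → A.Dom) (bs : Fin n → B.Dom) : Prop :=
  (∀ i j : Fin n, as i = as j ↔ bs i = bs j) ∧
  (∀ (R : L.Rel) (ts : Fin (L.arity R) → Fin n),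
    A.rel R (fun k => as (ts k)) ↔ B.rel R (fun k => bs (ts k)))

/-- Player II has a winning strategy in `EFD_γ` from position `(as, bs)`,
defined by transfinite recursion on `γ`. -/
def WinII {L : Vocab} (A B : Struc L) (γ : Ordinal) {n : ℕ}
    (as : Fin n → A.Dom) (bs : Fin n → B.Dom) : Prop :=
  IsPartialIso A B as bs ∧
  (∀ β : Ordinal, β < γ → ∀ c : A.Dom, ∃ d : B.Dom,
    WinII A B β (Fin.snoc as c) (Fin.snoc bs d)) ∧
  (∀ β : Ordinal, β < γ → ∀ d : B.Dom, ∃ c : A.Dom,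
    WinII A B β (Fin.snoc as c) (Fin.snoc bs d))
termination_by γ


/-! ### Auxiliary material for Karp's theorem -/

namespace KarpAux

universe u

variable {L : Vocab}

/-- The ordinal corresponding to an element of `β.ToType`. -/
noncomputable def ordIdx {β : Ordinal} (i : β.ToType) : Ordinal :=
  ((Ordinal.ToType.mk (o := β)).symm i).val

lemma ordIdx_lt {β : Ordinal} (i : β.ToType) : ordIdx i < β :=
  ((Ordinal.ToType.mk (o := β)).symm i).2

lemma exists_ordIdx {β γ : Ordinal} (h : γ < β) : ∃ i : β.ToType, ordIdx i = γ := by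
  refine ⟨Ordinal.ToType.mk (o := β) ⟨γ, h⟩, ?_⟩
  have h2 := (Ordinal.ToType.mk (o := β)).symm_apply_apply ⟨γ, h⟩
  exact congrArg Subtype.val h2

open scoped Classical in
/-- The atomic diagram of a tuple, as a conjunction of (negated) atomic formulas. -/
noncomputable def atomDiag (A : Struc L) (n : ℕ) (as : Fin n → A.Dom) : FmlInf L :=
  .iand ((Fin n × Fin n) ⊕ (Σ R : L.Rel, Fin (L.arity R) → Fin n)) fun x =>
    match x with
    | .inl (i, j) =>
        if as i = as j then .eq (i : ℕ) (j : ℕ) else .neq (i : ℕ) (j : ℕ)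
    | .inr ⟨R, ts⟩ =>
        if A.rel R (fun k => as (ts k)) then .rel R (fun k => (ts k : ℕ))
        else .nrel R (fun k => (ts k : ℕ))

/-- The Hintikka formula of rank `β` of a tuple `as` in `A`. -/
noncomputable def hin (A : Struc L) (β : Ordinal.{0}) (n : ℕ) (as : Fin n → A.Dom) :
    FmlInf L :=
  .iand (Unit ⊕ (β.ToType × A.Dom) ⊕ β.ToType) fun x =>
    match x with
    | .inl _ => atomDiag A n as
    | .inr (.inl (i, c)) => .ex n (hin A (ordIdx i) (n + 1) (Fin.snoc as c))
    | .inr (.inr i) =>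
        .all n (.ior A.Dom fun c => hin A (ordIdx i) (n + 1) (Fin.snoc as c))
termination_by β
decreasing_by all_goals exact ordIdx_lt _

lemma qr_atomDiag (A : Struc L) (n : ℕ) (as : Fin n → A.Dom) :
    qrInf.{u} (atomDiag A n as) = 0 := by
  rw [atomDiag, qrInf]
  refine le_antisymm (Ordinal.iSup_le ?_) zero_le
  rintro (⟨i, j⟩ | ⟨R, ts⟩) <;> dsimp only <;> split <;> rw [qrInf]

lemma qr_hin (A : Struc L) (β : Ordinal.{0}) (n : ℕ) (as : Fin n → A.Dom) :
    qrInf.{u} (hin A β n as) ≤ Ordinal.lift.{u} β := by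
  rw [hin, qrInf]
  apply Ordinal.iSup_le
  rintro (⟨⟩ | ⟨i, c⟩ | i) <;> dsimp only
  · rw [qr_atomDiag]; exact zero_le
  · rw [qrInf, Ordinal.add_one_eq_succ, Order.succ_le_iff]
    exact lt_of_le_of_lt (qr_hin A (ordIdx i) (n + 1) (Fin.snoc as c))
      (Ordinal.lift_lt.mpr (ordIdx_lt i))
  · rw [qrInf, qrInf, Ordinal.add_one_eq_succ, Order.succ_le_iff]
    refine lt_of_le_of_lt (Ordinal.iSup_le fun c => ?_)
      (Ordinal.lift_lt.mpr (ordIdx_lt i))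
    exact qr_hin A (ordIdx i) (n + 1) (Fin.snoc as c)
termination_by β
decreasing_by all_goals exact ordIdx_lt _

lemma fv_atomDiag (A : Struc L) (n : ℕ) (as : Fin n → A.Dom) :
    freeVarsInf (atomDiag A n as) ⊆ {m | m < n} := by
  rw [atomDiag, freeVarsInf]
  apply Set.iUnion_subset
  rintro (⟨i, j⟩ | ⟨R, ts⟩) <;> dsimp only <;> split <;> rw [freeVarsInf] <;>
      intro m hm
  · simp only [Set.mem_insert_iff, Set.mem_singleton_iff] at hm
    rcases hm with rfl | rfl
    exacts [i.isLt, j.isLt]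
  · simp only [Set.mem_insert_iff, Set.mem_singleton_iff] at hm
    rcases hm with rfl | rfl
    exacts [i.isLt, j.isLt]
  · obtain ⟨k, rfl⟩ := hm; exact (ts k).isLt
  · obtain ⟨k, rfl⟩ := hm; exact (ts k).isLt

lemma fv_hin (A : Struc L) (β : Ordinal.{0}) (n : ℕ) (as : Fin n → A.Dom) :
    freeVarsInf (hin A β n as) ⊆ {m | m < n} := by
  rw [hin, freeVarsInf]
  apply Set.iUnion_subset
  rintro (⟨⟩ | ⟨i, c⟩ | i) <;> dsimp only
  · exact fv_atomDiag A n as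
  · rw [freeVarsInf]
    rintro m ⟨hm, hmn⟩
    have h1 := fv_hin A (ordIdx i) (n + 1) (Fin.snoc as c) hm
    simp only [Set.mem_setOf_eq] at h1 ⊢
    simp only [Set.mem_singleton_iff] at hmn
    omega
  · rw [freeVarsInf]
    rintro m ⟨hm, hmn⟩
    rw [freeVarsInf] at hm
    simp only [Set.mem_iUnion] at hm
    obtain ⟨c, hm⟩ := hm
    have h1 := fv_hin A (ordIdx i) (n + 1) (Fin.snoc as c) hm
    simp only [Set.mem_setOf_eq] at h1 ⊢
    simp only [Set.mem_singleton_iff] at hmn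
    omega
termination_by β
decreasing_by all_goals exact ordIdx_lt _

/-- Player II wins the game between `A` and itself from any identical position. -/
lemma winII_refl (A : Struc L) (γ : Ordinal.{u}) :
    ∀ (n : ℕ) (as : Fin n → A.Dom), WinII A A γ as as := by
  induction γ using Ordinal.induction with
  | _ γ IH =>
    intro n as
    rw [WinII]
    refine ⟨⟨fun i j => Iff.rfl, fun R ts => Iff.rfl⟩, ?_, ?_⟩
    · intro β hβ c; exact ⟨c, IH β hβ _ _⟩
    · intro β hβ d; exact ⟨d, IH β hβ _ _⟩

/-- Winning is antitone in the ordinal. -/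
lemma winII_mono (A B : Struc L) {γ γ' : Ordinal.{u}} (h : γ' ≤ γ) {n : ℕ}
    {as : Fin n → A.Dom} {bs : Fin n → B.Dom} (hw : WinII A B γ as bs) :
    WinII A B γ' as bs := by
  rw [WinII] at hw ⊢
  exact ⟨hw.1, fun β hβ => hw.2.1 β (lt_of_lt_of_le hβ h),
    fun β hβ => hw.2.2 β (lt_of_lt_of_le hβ h)⟩

lemma update_snoc {D : Type} {n : ℕ} {bs : Fin n → D} {w : ℕ → D} {d : D}
    (hw : ∀ i : Fin n, w i = bs i) :
    ∀ i : Fin (n + 1), Function.update w n d (i : ℕ) = (Fin.snoc bs d : Fin (n + 1) → D) i := by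
  intro i
  induction i using Fin.lastCases with
  | last =>
    rw [Fin.snoc_last, Fin.val_last, Function.update_self]
  | cast j =>
    rw [Fin.snoc_castSucc, Fin.coe_castSucc, Function.update_of_ne, hw]
    exact Nat.ne_of_lt j.isLt

lemma sat_atomDiag {A B : Struc L} {n : ℕ} {as : Fin n → A.Dom}
    {bs : Fin n → B.Dom} {w : ℕ → B.Dom} (hw : ∀ i : Fin n, w i = bs i) :
    SatInf B w (atomDiag A n as) ↔ IsPartialIso A B as bs := by
  rw [atomDiag, SatInf]
  constructor
  · intro h
    constructor
    · intro i j
      have hij := h (.inl (i, j))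
      dsimp only at hij
      split at hij
      · rw [SatInf] at hij
        rw [hw, hw] at hij
        exact iff_of_true (by assumption) hij
      · rw [SatInf] at hij
        rw [hw, hw] at hij
        exact iff_of_false (by assumption) hij
    · intro R ts
      have hR := h (.inr ⟨R, ts⟩)
      dsimp only at hR
      split at hR
      · rw [SatInf] at hR
        have heq : (fun k => w ((ts k : ℕ))) = fun k => bs (ts k) :=
          funext fun k => hw (ts k)
        rw [heq] at hR
        exact iff_of_true (by assumption) hR
      · rw [SatInf] at hR
        have heq : (fun k => w ((ts k : ℕ))) = fun k => bs (ts k) :=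
          funext fun k => hw (ts k)
        rw [heq] at hR
        exact iff_of_false (by assumption) hR
  · rintro ⟨h1, h2⟩
    rintro (⟨i, j⟩ | ⟨R, ts⟩) <;> dsimp only
    · split
      · rw [SatInf, hw, hw]
        exact (h1 i j).mp (by assumption)
      · rw [SatInf, hw, hw]
        intro hc
        exact (by assumption : ¬ as i = as j) ((h1 i j).mpr hc)
    · have heq : (fun k => w ((ts k : ℕ))) = fun k => bs (ts k) :=
        funext fun k => hw (ts k)
      split
      · rw [SatInf, heq]
        exact (h2 R ts).mp (by assumption)
      · rw [SatInf, heq]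
        intro hc
        exact (by assumption : ¬ A.rel R fun k => as (ts k)) ((h2 R ts).mpr hc)

/-- The fundamental property of Hintikka formulas: `B` satisfies the rank-`β`
Hintikka formula of `ā` at `b̄` iff Player II wins `EFD_β` from `(ā, b̄)`. -/
lemma sat_hin (A B : Struc L) (β : Ordinal.{0}) :
    ∀ (n : ℕ) (as : Fin n → A.Dom) (bs : Fin n → B.Dom) (w : ℕ → B.Dom),
      (∀ i : Fin n, w i = bs i) →
      (SatInf B w (hin A β n as) ↔ WinII A B (Ordinal.lift.{u} β) as bs) := by
  induction β using Ordinal.induction with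
  | _ β IH =>
  intro n as bs w hw
  rw [hin, WinII, SatInf]
  constructor
  · intro h
    refine ⟨(sat_atomDiag hw).mp (h (.inl ())), ?_, ?_⟩
    · intro γ hγ c
      obtain ⟨δ, hδ, rfl⟩ := Ordinal.lt_lift_iff.mp hγ
      obtain ⟨i, rfl⟩ := exists_ordIdx hδ
      have hex := h (.inr (.inl (i, c)))
      dsimp only at hex
      rw [SatInf] at hex
      obtain ⟨d, hd⟩ := hex
      exact ⟨d, (IH _ (ordIdx_lt i) _ _ _ _ (update_snoc hw)).mp hd⟩
    · intro γ hγ d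
      obtain ⟨δ, hδ, rfl⟩ := Ordinal.lt_lift_iff.mp hγ
      obtain ⟨i, rfl⟩ := exists_ordIdx hδ
      have hall := h (.inr (.inr i))
      dsimp only at hall
      rw [SatInf] at hall
      have hall' := hall d
      rw [SatInf] at hall'
      obtain ⟨c, hc⟩ := hall'
      exact ⟨c, (IH _ (ordIdx_lt i) _ _ _ _ (update_snoc hw)).mp hc⟩
  · rintro ⟨h0, h1, h2⟩
    rintro (⟨⟩ | ⟨i, c⟩ | i) <;> dsimp only
    · exact (sat_atomDiag hw).mpr h0
    · rw [SatInf]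
      obtain ⟨d, hd⟩ :=
        h1 (Ordinal.lift.{u} (ordIdx i)) (Ordinal.lift_lt.mpr (ordIdx_lt i)) c
      exact ⟨d, (IH _ (ordIdx_lt i) _ _ _ _ (update_snoc hw)).mpr hd⟩
    · rw [SatInf]
      intro d
      rw [SatInf]
      obtain ⟨c, hc⟩ :=
        h2 (Ordinal.lift.{u} (ordIdx i)) (Ordinal.lift_lt.mpr (ordIdx_lt i)) d
      exact ⟨c, (IH _ (ordIdx_lt i) _ _ _ _ (update_snoc hw)).mpr hc⟩

/-- Player II wins the game of every small length from `(as, bs)`. -/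
def AllWin (A B : Struc L) {n : ℕ} (as : Fin n → A.Dom) (bs : Fin n → B.Dom) :
    Prop :=
  ∀ δ : Ordinal.{0}, WinII A B (Ordinal.lift.{u} δ) as bs

lemma allWin_step1 {A B : Struc L} {n : ℕ} {as : Fin n → A.Dom}
    {bs : Fin n → B.Dom} (h : AllWin.{u} A B as bs) (c : A.Dom) :
    ∃ d : B.Dom, AllWin.{u} A B (Fin.snoc as c) (Fin.snoc bs d) := by
  by_contra hc
  push_neg at hc
  simp only [AllWin, not_forall] at hc
  choose δf hδf using hc
  set δs : Ordinal.{0} := ⨆ d, δf d with hδs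
  have h1 := h (δs + 1)
  rw [WinII] at h1
  obtain ⟨d, hd⟩ := h1.2.1 (Ordinal.lift.{u} δs)
    (Ordinal.lift_lt.mpr (by rw [Ordinal.add_one_eq_succ]; exact Order.lt_succ δs)) c
  exact hδf d (winII_mono A B (Ordinal.lift_le.mpr (Ordinal.le_iSup δf d)) hd)

lemma allWin_step2 {A B : Struc L} {n : ℕ} {as : Fin n → A.Dom}
    {bs : Fin n → B.Dom} (h : AllWin.{u} A B as bs) (d : B.Dom) :
    ∃ c : A.Dom, AllWin.{u} A B (Fin.snoc as c) (Fin.snoc bs d) := by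
  by_contra hc
  push_neg at hc
  simp only [AllWin, not_forall] at hc
  choose δf hδf using hc
  set δs : Ordinal.{0} := ⨆ c, δf c with hδs
  have h1 := h (δs + 1)
  rw [WinII] at h1
  obtain ⟨c, hd⟩ := h1.2.2 (Ordinal.lift.{u} δs)
    (Ordinal.lift_lt.mpr (by rw [Ordinal.add_one_eq_succ]; exact Order.lt_succ δs)) d
  exact hδf c (winII_mono A B (Ordinal.lift_le.mpr (Ordinal.le_iSup δf c)) hd)

/-- If Player II wins all games of small length from a position, then Player II
wins the game of any length from that position. -/
lemma allWin_win (A B : Struc L) (γ : Ordinal.{u}) :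
    ∀ (n : ℕ) (as : Fin n → A.Dom) (bs : Fin n → B.Dom),
      AllWin.{u} A B as bs → WinII A B γ as bs := by
  induction γ using Ordinal.induction with
  | _ γ IH =>
  intro n as bs h
  rw [WinII]
  refine ⟨?_, ?_, ?_⟩
  · have h0 := h 0
    rw [WinII] at h0
    exact h0.1
  · intro β hβ c
    obtain ⟨d, hd⟩ := allWin_step1 h c
    exact ⟨d, IH β hβ _ _ _ hd⟩
  · intro β hβ d
    obtain ⟨c, hc⟩ := allWin_step2 h d
    exact ⟨c, IH β hβ _ _ _ hc⟩

lemma update_snoc' {D : Type} {n : ℕ} {as : Fin n → D} {v : ℕ → D} {x : ℕ}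
    {a : D} {m : ℕ} (hm : m ≠ x) {i : Fin n} (h : v m = as i) :
    Function.update v x a m = (Fin.snoc as a : Fin (n + 1) → D) (Fin.castSucc i) := by
  rw [Function.update_of_ne hm, Fin.snoc_castSucc, h]

/-- If Player II wins `EFD_γ` from `(ā, b̄)` and `γ` bounds the quantifier
rank of `φ`, then `φ` cannot distinguish matching valuations. -/
lemma win_sat (A B : Struc L) (φ : FmlInf L) :
    ∀ (γ : Ordinal.{u}), qrInf φ ≤ γ →
    ∀ (n : ℕ) (as : Fin n → A.Dom) (bs : Fin n → B.Dom), WinII A B γ as bs →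
    ∀ (v : ℕ → A.Dom) (w : ℕ → B.Dom),
      (∀ m ∈ freeVarsInf φ, ∃ i : Fin n, v m = as i ∧ w m = bs i) →
      (SatInf A v φ ↔ SatInf B w φ) := by
  induction φ with
  | eq i j =>
    intro γ _ n as bs hwin v w hfree
    rw [WinII] at hwin
    rw [freeVarsInf] at hfree
    obtain ⟨i', hvi, hwi⟩ := hfree i (Set.mem_insert _ _)
    obtain ⟨j', hvj, hwj⟩ := hfree j (Set.mem_insert_iff.mpr (Or.inr rfl))
    rw [SatInf, SatInf, hvi, hvj, hwi, hwj]
    exact hwin.1.1 i' j'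
  | neq i j =>
    intro γ _ n as bs hwin v w hfree
    rw [WinII] at hwin
    rw [freeVarsInf] at hfree
    obtain ⟨i', hvi, hwi⟩ := hfree i (Set.mem_insert _ _)
    obtain ⟨j', hvj, hwj⟩ := hfree j (Set.mem_insert_iff.mpr (Or.inr rfl))
    rw [SatInf, SatInf, hvi, hvj, hwi, hwj]
    exact not_congr (hwin.1.1 i' j')
  | rel R ts =>
    intro γ _ n as bs hwin v w hfree
    rw [WinII] at hwin
    rw [freeVarsInf] at hfree
    choose g hg using fun k => hfree (ts k) (Set.mem_range_self k)
    rw [SatInf, SatInf]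
    have hA : (fun k => v (ts k)) = fun k => as (g k) := funext fun k => (hg k).1
    have hB : (fun k => w (ts k)) = fun k => bs (g k) := funext fun k => (hg k).2
    rw [hA, hB]
    exact hwin.1.2 R g
  | nrel R ts =>
    intro γ _ n as bs hwin v w hfree
    rw [WinII] at hwin
    rw [freeVarsInf] at hfree
    choose g hg using fun k => hfree (ts k) (Set.mem_range_self k)
    rw [SatInf, SatInf]
    have hA : (fun k => v (ts k)) = fun k => as (g k) := funext fun k => (hg k).1
    have hB : (fun k => w (ts k)) = fun k => bs (g k) := funext fun k => (hg k).2
    rw [hA, hB]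
    exact not_congr (hwin.1.2 R g)
  | iand I f IH =>
    intro γ hγ n as bs hwin v w hfree
    rw [qrInf] at hγ
    rw [freeVarsInf] at hfree
    rw [SatInf, SatInf]
    have key : ∀ i, SatInf A v (f i) ↔ SatInf B w (f i) := by
      intro i
      have hqi : qrInf (f i) ≤ γ := by
        refine le_trans ?_ hγ
        apply Ordinal.le_iSup
      refine IH i γ hqi n as bs hwin v w ?_
      intro m hm
      exact hfree m (Set.mem_iUnion_of_mem i hm)
    exact forall_congr' key
  | ior I f IH =>
    intro γ hγ n as bs hwin v w hfree
    rw [qrInf] at hγ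
    rw [freeVarsInf] at hfree
    rw [SatInf, SatInf]
    have key : ∀ i, SatInf A v (f i) ↔ SatInf B w (f i) := by
      intro i
      have hqi : qrInf (f i) ≤ γ := by
        refine le_trans ?_ hγ
        apply Ordinal.le_iSup
      refine IH i γ hqi n as bs hwin v w ?_
      intro m hm
      exact hfree m (Set.mem_iUnion_of_mem i hm)
    exact exists_congr key
  | ex x ψ IH =>
    intro γ hγ n as bs hwin v w hfree
    rw [qrInf] at hγ
    have hlt : qrInf ψ < γ := by
      rwa [Ordinal.add_one_eq_succ, Order.succ_le_iff] at hγ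
    rw [WinII] at hwin
    rw [freeVarsInf] at hfree
    rw [SatInf, SatInf]
    constructor
    · rintro ⟨a, ha⟩
      obtain ⟨d, hd⟩ := hwin.2.1 (qrInf ψ) hlt a
      refine ⟨d, ?_⟩
      refine (IH (qrInf ψ) le_rfl (n + 1) _ _ hd (Function.update v x a)
        (Function.update w x d) ?_).mp ha
      intro m hm
      by_cases hmx : m = x
      · subst hmx
        exact ⟨Fin.last n, by rw [Function.update_self, Fin.snoc_last],
          by rw [Function.update_self, Fin.snoc_last]⟩
      · obtain ⟨i, hvi, hwi⟩ := hfree m ⟨hm, hmx⟩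
        exact ⟨Fin.castSucc i, update_snoc' hmx hvi, update_snoc' hmx hwi⟩
    · rintro ⟨d, hd⟩
      obtain ⟨a, ha⟩ := hwin.2.2 (qrInf ψ) hlt d
      refine ⟨a, ?_⟩
      refine (IH (qrInf ψ) le_rfl (n + 1) _ _ ha (Function.update v x a)
        (Function.update w x d) ?_).mpr hd
      intro m hm
      by_cases hmx : m = x
      · subst hmx
        exact ⟨Fin.last n, by rw [Function.update_self, Fin.snoc_last],
          by rw [Function.update_self, Fin.snoc_last]⟩
      · obtain ⟨i, hvi, hwi⟩ := hfree m ⟨hm, hmx⟩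
        exact ⟨Fin.castSucc i, update_snoc' hmx hvi, update_snoc' hmx hwi⟩
  | all x ψ IH =>
    intro γ hγ n as bs hwin v w hfree
    rw [qrInf] at hγ
    have hlt : qrInf ψ < γ := by
      rwa [Ordinal.add_one_eq_succ, Order.succ_le_iff] at hγ
    rw [WinII] at hwin
    rw [freeVarsInf] at hfree
    rw [SatInf, SatInf]
    constructor
    · intro h d
      obtain ⟨a, ha⟩ := hwin.2.2 (qrInf ψ) hlt d
      refine (IH (qrInf ψ) le_rfl (n + 1) _ _ ha (Function.update v x a)
        (Function.update w x d) ?_).mp (h a)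
      intro m hm
      by_cases hmx : m = x
      · subst hmx
        exact ⟨Fin.last n, by rw [Function.update_self, Fin.snoc_last],
          by rw [Function.update_self, Fin.snoc_last]⟩
      · obtain ⟨i, hvi, hwi⟩ := hfree m ⟨hm, hmx⟩
        exact ⟨Fin.castSucc i, update_snoc' hmx hvi, update_snoc' hmx hwi⟩
    · intro h a
      obtain ⟨d, hd⟩ := hwin.2.1 (qrInf ψ) hlt a
      refine (IH (qrInf ψ) le_rfl (n + 1) _ _ hd (Function.update v x a)
        (Function.update w x d) ?_).mpr (h d)
      intro m hm
      by_cases hmx : m = x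
      · subst hmx
        exact ⟨Fin.last n, by rw [Function.update_self, Fin.snoc_last],
          by rw [Function.update_self, Fin.snoc_last]⟩
      · obtain ⟨i, hvi, hwi⟩ := hfree m ⟨hm, hmx⟩
        exact ⟨Fin.castSucc i, update_snoc' hmx hvi, update_snoc' hmx hwi⟩

end KarpAux

/-- Karp's theorem. -/
theorem karp {L : Vocab} (A B : Struc L) (α : Ordinal) :
    EquivInf A B α ↔
      WinII A B α (Fin.elim0 : Fin 0 → A.Dom) (Fin.elim0 : Fin 0 → B.Dom) := by
  constructor
  · intro h
    have hwin : ∀ δ : Ordinal.{0}, Ordinal.lift δ ≤ α →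
        WinII A B (Ordinal.lift δ)
          (Fin.elim0 : Fin 0 → A.Dom) (Fin.elim0 : Fin 0 → B.Dom) := by
      intro δ hδ
      have hq : qrInf (KarpAux.hin A δ 0 Fin.elim0) ≤ α :=
        le_trans (KarpAux.qr_hin A δ 0 _) hδ
      have hf : freeVarsInf (KarpAux.hin A δ 0 Fin.elim0) = ∅ := by
        have h1 := KarpAux.fv_hin A δ 0 Fin.elim0
        refine Set.eq_empty_of_subset_empty (fun m hm => ?_)
        exact absurd (h1 hm) (by simp)
      have hiff := h _ hf hq
      have hA : ∀ v : ℕ → A.Dom, SatInf A v (KarpAux.hin A δ 0 Fin.elim0) := by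
        intro v
        exact (KarpAux.sat_hin.{0} A A δ 0 Fin.elim0 Fin.elim0 v
          (fun i => i.elim0)).mpr (KarpAux.winII_refl A _ 0 _)
      have hB := hiff.mp hA
      obtain ⟨b⟩ := B.nonempty
      exact (KarpAux.sat_hin A B δ 0 Fin.elim0 Fin.elim0 (fun _ => b)
        (fun i => i.elim0)).mp (hB _)
    by_cases hα : ∃ δ : Ordinal.{0}, Ordinal.lift δ = α
    · obtain ⟨δ, rfl⟩ := hα
      exact hwin δ le_rfl
    · refine KarpAux.allWin_win A B α 0 _ _ (fun δ => hwin δ ?_)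
      by_contra hc
      push_neg at hc
      obtain ⟨δ', h'⟩ := Ordinal.mem_range_lift_of_le hc.le
      exact hα ⟨δ', h'⟩
  · intro hwin φ hf hq
    have key : ∀ (v : ℕ → A.Dom) (w : ℕ → B.Dom),
        SatInf A v φ ↔ SatInf B w φ := by
      intro v w
      refine KarpAux.win_sat A B φ α hq 0 Fin.elim0 Fin.elim0 hwin v w ?_
      intro m hm
      rw [hf] at hm
      exact hm.elim
    obtain ⟨a⟩ := A.nonempty
    obtain ⟨b⟩ := B.nonempty
    constructor
    · intro hA w; exact (key (fun _ => a) w).mp (hA _)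
    · intro hB v; exact (key v (fun _ => b)).mpr (hB _)
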